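/- Let A be a Nelson algebra defined on an algebraic lattice, J its set of completely join-irreducible elements, and define ρ(j) = j if j ≤ j*, and ρ(j) = j* otherwise. Define a relation R on J by x R y iff ρ(x) ≤ ρ(y). Then R is a quasiorder on J, and for every x ∈ J: R(x) = R(x*), and R(x) = {x} if and only if x = x*. -/

import Mathlib

def CompletelyJoinIrreducible {A : Type*} [CompleteLattice A] (j : A) : Prop :=
  ∀ S : Set A, j = sSup S → j ∈ S

def star {A : Type*} [CompleteLattice A] (c : A → A) (j : A) : A :=
  sInf {x : A | ¬ x ≤ c j}

-- `ρ(j) = j` if `j ≤ j*` (i.e. `j ∈ J⁻ ∪ J*`), and `ρ(j) = j*` otherwise.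
open Classical in
noncomputable def rho {A : Type*} [CompleteLattice A] (c : A → A) (j : A) : A :=
  if j ≤ star c j then j else star c j

section Aux

variable {A : Type*} [CompleteLattice A] [IsCompactlyGenerated A]

/-- Frame inequality from compact generation plus binary distributivity. -/
lemma aux_frame (hdist : ∀ x y z : A, x ⊓ (y ⊔ z) = (x ⊓ y) ⊔ (x ⊓ z))
    (a : A) (S : Set A) : a ⊓ sSup S ≤ sSup ((fun s => a ⊓ s) '' S) := by
  classical
  obtain ⟨K, hK, hKsup⟩ := IsCompactlyGenerated.exists_sSup_eq (a ⊓ sSup S)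
  conv_lhs => rw [← hKsup]
  apply sSup_le
  intro k hk
  have hk1 : k ≤ a ⊓ sSup S := hKsup ▸ le_sSup hk
  obtain ⟨t, htS, htk⟩ := (CompleteLattice.isCompactElement_iff_exists_le_sSup_of_le_sSup (k := k)).mp (hK k hk) S (hk1.trans inf_le_right)
  have key : ∀ u : Finset A, ↑u ⊆ S → a ⊓ u.sup id ≤ sSup ((fun s => a ⊓ s) '' S) := by
    intro u
    induction u using Finset.induction_on with
    | empty => intro _; simp
    | insert b u' hx ih =>
      intro hins
      rw [Finset.sup_insert, hdist]
      apply sup_le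
      · exact le_sSup ⟨b, hins (by simp), rfl⟩
      · exact ih fun z hz => hins (by simp [hz])
  exact le_trans (le_inf (hk1.trans inf_le_left) htk) (key t htS)

lemma aux_sup_prime (hdist : ∀ x y z : A, x ⊓ (y ⊔ z) = (x ⊓ y) ⊔ (x ⊓ z))
    {x : A} (hx : CompletelyJoinIrreducible x)
    {S : Set A} (hle : x ≤ sSup S) : ∃ s ∈ S, x ≤ s := by
  have h1 : x = sSup ((fun s => x ⊓ s) '' S) := by
    apply le_antisymm
    · calc x = x ⊓ sSup S := (inf_eq_left.2 hle).symm
        _ ≤ _ := aux_frame hdist x S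
    · apply sSup_le
      rintro _ ⟨s, _, rfl⟩
      exact inf_le_left
  obtain ⟨s, hsS, heq⟩ := hx _ h1
  exact ⟨s, hsS, inf_eq_left.mp heq⟩

variable (c : A → A)

lemma aux_le_c_iff (hinv : ∀ x, c (c x) = x)
    (hanti : ∀ x y : A, x ≤ y ↔ c y ≤ c x) (x y : A) : x ≤ c y ↔ y ≤ c x := by
  rw [hanti x (c y), hinv]

lemma aux_c_sInf (hinv : ∀ x, c (c x) = x)
    (hanti : ∀ x y : A, x ≤ y ↔ c y ≤ c x) (S : Set A) :
    c (sInf S) = sSup ((fun s => c s) '' S) := by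
  apply le_antisymm
  · have h : c (sSup ((fun s => c s) '' S)) ≤ sInf S := by
      apply le_sInf
      intro s hs
      have h1 : c s ≤ sSup ((fun s => c s) '' S) := le_sSup ⟨s, hs, rfl⟩
      have h2 := (hanti _ _).mp h1
      rwa [hinv] at h2
    have h3 := (hanti _ _).mp h
    rwa [hinv] at h3
  · apply sSup_le
    rintro _ ⟨s, hs, rfl⟩
    exact (hanti _ _).mp (sInf_le hs)

lemma aux_star_not_le (hdist : ∀ x y z : A, x ⊓ (y ⊔ z) = (x ⊓ y) ⊔ (x ⊓ z))
    (hinv : ∀ x, c (c x) = x) (hanti : ∀ x y : A, x ≤ y ↔ c y ≤ c x)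
    {x : A} (hx : CompletelyJoinIrreducible x) : ¬ star c x ≤ c x := by
  intro h
  have h1 : x ≤ c (star c x) := (aux_le_c_iff c hinv hanti _ _).mp h
  have h1' : x ≤ sSup ((fun s => c s) '' {z : A | ¬ z ≤ c x}) := by
    rw [← aux_c_sInf c hinv hanti]; exact h1
  obtain ⟨_, ⟨y, hy, rfl⟩, hxy⟩ := aux_sup_prime hdist hx h1'
  exact hy ((aux_le_c_iff c hinv hanti _ _).mp hxy)

lemma aux_star_star (hdist : ∀ x y z : A, x ⊓ (y ⊔ z) = (x ⊓ y) ⊔ (x ⊓ z))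
    (hinv : ∀ x, c (c x) = x) (hanti : ∀ x y : A, x ≤ y ↔ c y ≤ c x)
    {x : A} (hx : CompletelyJoinIrreducible x) : star c (star c x) = x := by
  apply le_antisymm
  · apply sInf_le
    intro hle
    exact aux_star_not_le c hdist hinv hanti hx ((aux_le_c_iff c hinv hanti _ _).mp hle)
  · apply le_sInf
    intro y hy
    by_contra hxy
    have h1 : ¬ c y ≤ c x := fun h => hxy ((hanti x y).mpr h)
    have h2 : star c x ≤ c y := sInf_le h1
    exact hy ((aux_le_c_iff c hinv hanti _ _).mpr h2)

lemma aux_star_cji (hdist : ∀ x y z : A, x ⊓ (y ⊔ z) = (x ⊓ y) ⊔ (x ⊓ z))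
    (hinv : ∀ x, c (c x) = x) (hanti : ∀ x y : A, x ≤ y ↔ c y ≤ c x)
    {x : A} (hx : CompletelyJoinIrreducible x) :
    CompletelyJoinIrreducible (star c x) := by
  intro S hS
  have hne : ∃ s ∈ S, ¬ s ≤ c x := by
    by_contra hall
    push_neg at hall
    exact aux_star_not_le c hdist hinv hanti hx (hS ▸ sSup_le hall)
  obtain ⟨s, hsS, hs⟩ := hne
  have h1 : star c x ≤ s := sInf_le hs
  have h2 : s ≤ star c x := hS ▸ le_sSup hsS
  rwa [le_antisymm h1 h2]

lemma aux_star_antitone (hinv : ∀ x, c (c x) = x)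
    (hanti : ∀ x y : A, x ≤ y ↔ c y ≤ c x) {x y : A} (hxy : x ≤ y) :
    star c y ≤ star c x := by
  apply sInf_le_sInf
  intro z hz hzy
  exact hz (hzy.trans ((hanti x y).mp hxy))

lemma aux_star_comparable (hdist : ∀ x y z : A, x ⊓ (y ⊔ z) = (x ⊓ y) ⊔ (x ⊓ z))
    (hinv : ∀ x, c (c x) = x) (hanti : ∀ x y : A, x ≤ y ↔ c y ≤ c x)
    (hkl : ∀ x y : A, x ⊓ c x ≤ y ⊔ c y)
    {x : A} (hx : CompletelyJoinIrreducible x) :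
    x ≤ star c x ∨ star c x ≤ x := by
  by_cases h : x ≤ c x
  · left
    apply le_sInf
    intro y hy
    have h1 : x ≤ sSup {y, c y} := by
      rw [sSup_pair]
      exact le_trans (le_inf le_rfl h) (hkl x y)
    obtain ⟨s, hs, hxs⟩ := aux_sup_prime hdist hx h1
    rcases hs with rfl | hs
    · exact hxs
    · rw [Set.mem_singleton_iff] at hs
      subst hs
      exact absurd ((aux_le_c_iff c hinv hanti _ _).mp hxs) hy
  · right
    exact sInf_le h

lemma aux_rho_star (hdist : ∀ x y z : A, x ⊓ (y ⊔ z) = (x ⊓ y) ⊔ (x ⊓ z))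
    (hinv : ∀ x, c (c x) = x) (hanti : ∀ x y : A, x ≤ y ↔ c y ≤ c x)
    (hkl : ∀ x y : A, x ⊓ c x ≤ y ⊔ c y)
    {x : A} (hx : CompletelyJoinIrreducible x) :
    rho c (star c x) = rho c x := by
  have hss := aux_star_star c hdist hinv hanti hx
  rcases aux_star_comparable c hdist hinv hanti hkl hx with h | h
  · by_cases h2 : star c x ≤ x
    · rw [← le_antisymm h h2]
    · unfold rho
      rw [if_pos h, if_neg (by rw [hss]; exact h2), hss]
  · by_cases h2 : x ≤ star c x
    · rw [← le_antisymm h2 h]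
    · unfold rho
      rw [if_pos (by rw [hss]; exact h), if_neg h2]

end Aux

/-- For a Nelson algebra on an algebraic lattice, the relation
`x R y ↔ ρ(x) ≤ ρ(y)` on the set `J` of completely join-irreducible elements is
a quasiorder such that `R(x) = R(x*)` and `R(x) = {x} ↔ x = x*`. -/
theorem nelson_quasiorder_construction {A : Type*}
    [CompleteLattice A] [IsCompactlyGenerated A]
    (hdist : ∀ x y z : A, x ⊓ (y ⊔ z) = (x ⊓ y) ⊔ (x ⊓ z))
    (c : A → A) (hinv : ∀ x, c (c x) = x)
    (hanti : ∀ x y : A, x ≤ y ↔ c y ≤ c x)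
    (hkl : ∀ x y : A, x ⊓ c x ≤ y ⊔ c y)
    (arrow : A → A → A)
    (hN1 : ∀ a, arrow a a = ⊤)
    (hN2 : ∀ a b, (c a ⊔ b) ⊓ arrow a b = c a ⊔ b)
    (hN3 : ∀ a b, a ⊓ arrow a b = a ⊓ (c a ⊔ b))
    (hN4 : ∀ a b d, arrow a (b ⊓ d) = arrow a b ⊓ arrow a d)
    (hN5 : ∀ a b d, arrow (a ⊓ b) d = arrow a (arrow b d)) :
    (∀ x : A, CompletelyJoinIrreducible x → rho c x ≤ rho c x) ∧
    (∀ x y z : A, CompletelyJoinIrreducible x → CompletelyJoinIrreducible y →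
      CompletelyJoinIrreducible z → rho c x ≤ rho c y → rho c y ≤ rho c z →
      rho c x ≤ rho c z) ∧
    (∀ x : A, CompletelyJoinIrreducible x →
      ({y : A | CompletelyJoinIrreducible y ∧ rho c x ≤ rho c y} =
        {y : A | CompletelyJoinIrreducible y ∧ rho c (star c x) ≤ rho c y}) ∧
      ({y : A | CompletelyJoinIrreducible y ∧ rho c x ≤ rho c y} = {x} ↔
        x = star c x)) := by
  refine ⟨fun x _ => le_rfl, fun x y z _ _ _ h1 h2 => h1.trans h2, fun x hx => ?_⟩
  have hrs := aux_rho_star c hdist hinv hanti hkl hx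
  constructor
  · simp only [hrs]
  · constructor
    · intro hset
      have hmem : star c x ∈ {y : A | CompletelyJoinIrreducible y ∧ rho c x ≤ rho c y} :=
        ⟨aux_star_cji c hdist hinv hanti hx, by rw [hrs]⟩
      rw [hset, Set.mem_singleton_iff] at hmem
      exact hmem.symm
    · intro hxx
      have hrx : rho c x = x := by
        unfold rho
        rw [if_pos (le_of_eq hxx)]
      ext y
      simp only [Set.mem_setOf_eq, Set.mem_singleton_iff]
      constructor
      · rintro ⟨hy, hle⟩
        rw [hrx] at hle
        by_cases h2 : y ≤ star c y
        · have hrho : rho c y = y := by unfold rho; rw [if_pos h2]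
          rw [hrho] at hle
          have h3 : star c y ≤ x := by
            have := aux_star_antitone c hinv hanti hle
            rwa [← hxx] at this
          exact le_antisymm (h2.trans h3) hle
        · have hrho : rho c y = star c y := by unfold rho; rw [if_neg h2]
          rw [hrho] at hle
          have h3 : y ≤ x := by
            have := aux_star_antitone c hinv hanti hle
            rwa [aux_star_star c hdist hinv hanti hy, ← hxx] at this
          exact absurd (h3.trans hle) h2
      · rintro rfl
        exact ⟨hx, le_rfl⟩
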